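/- For every n ≥ 1, the position p(n) of the integer n in row n−1 of the Hurt-Sada array satisfies p(n) = ⌊(n+1)/φ⌋. -/

import Mathlib

/-- The golden ratio `(1 + √5)/2`. -/
noncomputable def phi : ℝ := (1 + Real.sqrt 5) / 2

/-- The Hurt-Sada array `A : ℕ → ℕ → ℕ`.  Row `0` is the identity sequence;
row `n+1` is obtained from row `n` by moving the entry `n+1` (located at the unique
position `p` with `A n p = n+1`) by `n+1` places to the right, shifting the jumped-over
entries one place left. -/
noncomputable def A : ℕ → ℕ → ℕ
  | 0, k => k
  | n + 1, j =>
    let p := sInf {i | A n i = n + 1}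
    if j < p then A n j
    else if j < p + (n + 1) then A n (j + 1)
    else if j = p + (n + 1) then n + 1
    else A n j

/-- `p n` is the (unique) position of `n` in row `n-1` of the Hurt-Sada array. -/
noncomputable def p (n : ℕ) : ℕ := sInf {i | A (n - 1) i = n}

noncomputable def b (m : ℕ) : ℕ := ⌊((m : ℝ) + 1) / phi⌋₊

lemma sqrt5_sq : Real.sqrt 5 ^ 2 = 5 := Real.sq_sqrt (by norm_num)
lemma sqrt5_nonneg : 0 ≤ Real.sqrt 5 := Real.sqrt_nonneg 5

lemma phi_gt_one : 1 < phi := by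
  unfold phi; nlinarith [sqrt5_sq, sqrt5_nonneg]

lemma phi_pos : 0 < phi := lt_trans one_pos phi_gt_one

lemma phi_mul_self : phi * phi = phi + 1 := by
  unfold phi; nlinarith [sqrt5_sq]

lemma phi_irr : Irrational phi := by
  have h5 : Irrational (Real.sqrt 5) := Nat.prime_five.irrational_sqrt
  have h1 : Irrational (1 + Real.sqrt 5) := by
    have := h5.ratCast_add (q := 1)
    simpa using this
  have := h1.div_natCast (by norm_num : (2:ℕ) ≠ 0)
  simpa [phi] using this

lemma factF (k m : ℕ) : b m ≤ k ↔ m ≤ k + b k := by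
  have hp := phi_pos
  have hsq := phi_mul_self
  have h1 : ((b k : ℝ)) ≤ ((k : ℝ) + 1) / phi := Nat.floor_le (by positivity)
  have h2 : ((k : ℝ) + 1) / phi < (b k : ℝ) + 1 := Nat.lt_floor_add_one _
  have h1' : (b k : ℝ) * phi ≤ (k : ℝ) + 1 := by
    rw [← le_div_iff₀ hp]; exact h1
  have h2' : (k : ℝ) + 1 < ((b k : ℝ) + 1) * phi := by
    rw [← div_lt_iff₀ hp]; exact h2
  constructor
  · intro h
    have hfl : ((m : ℝ) + 1) / phi < (k : ℝ) + 1 := by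
      have hbm : b m < k + 1 := Nat.lt_succ_of_le h
      unfold b at hbm
      have := (Nat.floor_lt (by positivity : (0:ℝ) ≤ ((m : ℝ) + 1) / phi)).mp hbm
      exact_mod_cast this
    have hlt : (m : ℝ) + 1 < ((k : ℝ) + 1) * phi := by
      rwa [div_lt_iff₀ hp] at hfl
    have key : ((k : ℝ) + 1) * phi < (k : ℝ) + (b k : ℝ) + 2 := by
      nlinarith [h2']
    have : (m : ℝ) + 1 < (k : ℝ) + (b k : ℝ) + 2 := lt_trans hlt key
    have : (m : ℕ) + 1 < k + b k + 2 := by exact_mod_cast this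
    omega
  · intro h
    have hle : (m : ℝ) + 1 ≤ (k : ℝ) + 1 + (b k : ℝ) := by
      have : (m : ℕ) + 1 ≤ k + 1 + b k := by omega
      exact_mod_cast this
    have heq : ((k : ℝ) + 1) * phi = (k : ℝ) + 1 + ((k : ℝ) + 1) / phi := by
      field_simp
      nlinarith [hsq]
    have hle2 : (m : ℝ) + 1 ≤ ((k : ℝ) + 1) * phi := by
      rw [heq]; linarith
    have hirr : Irrational (((k + 1 : ℕ) : ℝ) * phi) := phi_irr.natCast_mul (by omega)
    have hne : (m : ℝ) + 1 ≠ ((k : ℝ) + 1) * phi := by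
      intro hcontra
      exact (hirr.ne_nat (m + 1)).symm (by push_cast; linarith)
    have hlt : (m : ℝ) + 1 < ((k : ℝ) + 1) * phi := lt_of_le_of_ne hle2 hne
    have : ((m : ℝ) + 1) / phi < (k : ℝ) + 1 := by rwa [div_lt_iff₀ hp]
    have : b m < k + 1 := by
      apply (Nat.floor_lt (by positivity : (0:ℝ) ≤ ((m : ℝ) + 1) / phi)).mpr
      exact_mod_cast this
    omega

lemma b_mono {x y : ℕ} (h : x ≤ y) : b x ≤ b y := by
  unfold b
  gcongr <;> first
    | exact le_of_lt phi_pos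
    | exact phi_pos
    | exact_mod_cast (by omega : x + 1 ≤ y + 1)

lemma b_le_self (m : ℕ) : b m ≤ m := (factF m m).mpr (by omega)

lemma b_zero : b 0 = 0 := by
  have := phi_gt_one
  unfold b
  rw [Nat.floor_eq_zero]
  rw [div_lt_one phi_pos]
  norm_num
  linarith

lemma b_one : b 1 = 1 := by
  have h1 := phi_gt_one
  have h2 : phi ≤ 2 := by unfold phi; nlinarith [sqrt5_sq, sqrt5_nonneg]
  have hp := phi_pos
  unfold b
  rw [Nat.floor_eq_iff (by positivity)]
  norm_num
  constructor
  · rw [le_div_iff₀ hp]; linarith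
  · rw [div_lt_iff₀ hp]; linarith

lemma b_succ_le (k : ℕ) : b (k + 1) ≤ b k + 1 := by
  have hp := phi_pos
  have h1 := phi_gt_one
  have hle : (((k + 1 : ℕ) : ℝ) + 1) / phi ≤ ((k : ℝ) + 1) / phi + 1 := by
    push_cast
    rw [div_add' _ _ _ (ne_of_gt hp)]
    gcongr
    linarith
  calc b (k + 1) ≤ ⌊((k : ℝ) + 1) / phi + 1⌋₊ := Nat.floor_le_floor hle
    _ = b k + 1 := by rw [Nat.floor_add_one (by positivity)]; rfl

noncomputable def g (n m : ℕ) : ℕ :=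
  if m < b (n + 1) then m
  else if m ≤ n then 2 * m + b m - n
  else if m ≤ n + b n then m + b m - (n + 1)
  else m

lemma gP (n : ℕ) : g n (n + 1) = b (n + 1) := by
  have f1 := b_le_self (n + 1)
  have f2 := factF n (n + 1)
  have f3 := factF 0 n
  have f4 : b 0 = 0 := b_zero
  have f5 : b 1 = 1 := b_one
  have f6 : n ≤ 0 → b (n + 1) ≤ b 1 := fun h => b_mono (by omega)
  have f7 : b 1 ≤ b (n + 1) := b_mono (by omega)
  unfold g
  split_ifs <;> omega

lemma gsucc (n : ℕ) : g (n + 1) (n + 1) = b (n + 1) + (n + 1) := by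
  have f1 : b 1 ≤ b (n + 1) := b_mono (by omega)
  have f2 : b 1 = 1 := b_one
  have f3 : b (n + 2) ≤ n + 1 ↔ n + 2 ≤ n + 1 + b (n + 1) := factF (n + 1) (n + 2)
  have e : n + 1 + 1 = n + 2 := rfl
  unfold g
  rw [e]
  split_ifs <;> omega

lemma stepLemma (n m : ℕ) :
    (g n m < b (n + 1) → g (n + 1) m = g n m) ∧
    (b (n + 1) < g n m → g n m ≤ b (n + 1) + (n + 1) → g (n + 1) m = g n m - 1) ∧
    (b (n + 1) + (n + 1) < g n m → g (n + 1) m = g n m) := by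
  have e : n + 1 + 1 = n + 2 := rfl
  have fMn := factF n m
  have fMn1 := factF (n + 1) m
  have fB1 := factF (b (n + 1)) (n + 1)
  have fB2 : b (n + 2) ≤ b (n + 1) ↔ n + 2 ≤ b (n + 1) + b (b (n + 1)) :=
    factF (b (n + 1)) (n + 2)
  have fN2 : b (n + 2) ≤ n + 1 ↔ n + 2 ≤ n + 1 + b (n + 1) := factF (n + 1) (n + 2)
  have fNB := factF (n + 1) (n + b n)
  have fSelfM := b_le_self m
  have fSelfN1 := b_le_self (n + 1)
  have fSelfN2 : b (n + 2) ≤ n + 2 := b_le_self (n + 2)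
  have m1 : m ≤ n → b m ≤ b n := fun h => b_mono h
  have m1' : n ≤ m → b n ≤ b m := fun h => b_mono h
  have m2 : m ≤ n + 1 → b m ≤ b (n + 1) := fun h => b_mono h
  have m2' : n + 1 ≤ m → b (n + 1) ≤ b m := fun h => b_mono h
  have m3 : m ≤ n + 2 → b m ≤ b (n + 2) := fun h => b_mono h
  have m3' : n + 2 ≤ m → b (n + 2) ≤ b m := fun h => b_mono h
  have m4 : m ≤ b (n + 1) → b m ≤ b (b (n + 1)) := fun h => b_mono h
  have m4' : b (n + 1) ≤ m → b (b (n + 1)) ≤ b m := fun h => b_mono h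
  have m5 : m ≤ n + b n → b m ≤ b (n + b n) := fun h => b_mono h
  have c1 : b n ≤ b (n + 1) := b_mono (by omega)
  have c2 : b (n + 1) ≤ b (n + 2) := b_mono (by omega)
  have c3 : b 1 ≤ b (n + 1) := b_mono (by omega)
  have c4 : b 1 = 1 := b_one
  have s1 : b (n + 2) ≤ b (n + 1) + 1 := b_succ_le (n + 1)
  have s0 : b (n + 1) ≤ b n + 1 := b_succ_le n
  unfold g
  rw [e]
  split_ifs <;> omega

lemma A_iff (n : ℕ) : ∀ i m, A n i = m ↔ g n m = i := by
  induction n with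
  | zero =>
    intro i m
    have h0 : A 0 i = i := rfl
    have hg : g 0 m = m := by
      have f4 : b 0 = 0 := b_zero
      have f5 : b 1 = 1 := b_one
      have hm : m ≤ 0 → b m ≤ b 0 := fun h => b_mono (by omega)
      unfold g
      split_ifs <;> omega
    rw [h0, hg]
    omega
  | succ n IH =>
    intro j m
    have hAP : A n (b (n + 1)) = n + 1 := (IH (b (n + 1)) (n + 1)).mpr (gP n)
    have hset : {i | A n i = n + 1} = {b (n + 1)} := by
      ext i
      simp only [Set.mem_setOf_eq, Set.mem_singleton_iff, IH i (n + 1), gP n]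
      exact eq_comm
    have hP : sInf {i | A n i = n + 1} = b (n + 1) := by
      rw [hset]; exact csInf_singleton _
    have hunfold : A (n + 1) j =
        (if j < b (n + 1) then A n j
         else if j < b (n + 1) + (n + 1) then A n (j + 1)
         else if j = b (n + 1) + (n + 1) then n + 1
         else A n j) := by
      rw [A, hP]
    rw [hunfold]
    obtain ⟨hSa, hSb, hSc⟩ := stepLemma n m
    have hiP : g n m = b (n + 1) → m = n + 1 := by
      intro h
      have h2 := (IH (b (n + 1)) m).mpr h
      omega
    have hEq : m = n + 1 → g n m = b (n + 1) ∧ g (n + 1) m = b (n + 1) + (n + 1) := by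
      rintro rfl
      exact ⟨gP n, gsucc n⟩
    split_ifs with h1 h2 h3
    · rw [IH j m]; omega
    · rw [IH (j + 1) m]; omega
    · omega
    · rw [IH j m]; omega

theorem position_formula (n : ℕ) (hn : 1 ≤ n) :
    p n = ⌊((n : ℝ) + 1) / phi⌋₊ := by
  cases n with
  | zero => omega
  | succ k =>
    show p (k + 1) = b (k + 1)
    have hset : {i | A k i = k + 1} = {b (k + 1)} := by
      ext i
      simp only [Set.mem_setOf_eq, Set.mem_singleton_iff, A_iff k i (k + 1), gP k]
      exact eq_comm
    unfold p
    rw [show k + 1 - 1 = k from rfl, hset]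
    exact csInf_singleton _
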